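/- Let R(t) = (1+t²/4)^{−1/2} · log(1 + t√(1+t²/4) + t²/2) = (1+t²/4)^{−1/2} · arccosh(1 + t²/2). Then the third derivative of R satisfies |R'''(t)| ≤ 1 for all t in the open interval (0,1). -/

import Mathlib

noncomputable def R (t : ℝ) : ℝ :=
  Real.log (1 + t * Real.sqrt (1 + t ^ 2 / 4) + t ^ 2 / 2) / Real.sqrt (1 + t ^ 2 / 4)

noncomputable def gg (t : ℝ) : ℝ := Real.sqrt (1 + t ^ 2 / 4)
noncomputable def AA (t : ℝ) : ℝ := Real.log (1 + t * gg t + t ^ 2 / 2)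

lemma hc_pos (t : ℝ) : (0:ℝ) < 1 + t ^ 2 / 4 := by positivity
lemma gg_pos (t : ℝ) : 0 < gg t := Real.sqrt_pos.mpr (hc_pos t)
lemma gg_sq (t : ℝ) : gg t ^ 2 = 1 + t ^ 2 / 4 := Real.sq_sqrt (hc_pos t).le
lemma gg_ge_one (t : ℝ) : 1 ≤ gg t := by nlinarith [gg_sq t, gg_pos t]

lemma f_pos (t : ℝ) : 0 < 1 + t * gg t + t ^ 2 / 2 := by
  have h1 : (gg t + t/2) * (gg t - t/2) = 1 := by linear_combination gg_sq t
  have h2 : gg t + t/2 ≠ 0 := by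
    intro h; rw [h, zero_mul] at h1; exact one_ne_zero h1.symm
  have h3 : 0 < (gg t + t/2)^2 := by positivity
  nlinarith [h3]

lemma hg (t : ℝ) : HasDerivAt gg (t / (4 * gg t)) t := by
  have h : HasDerivAt (fun x : ℝ => 1 + x ^ 2 / 4) (2 * t / 4) t := by
    simpa using ((hasDerivAt_pow 2 t).div_const 4).const_add 1
  have h2 := h.sqrt (ne_of_gt (hc_pos t))
  refine HasDerivAt.congr_deriv h2 (Eq.symm ?_)
  show t / (4 * gg t) = 2 * t / 4 / (2 * Real.sqrt (1 + t ^ 2 / 4))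
  rw [show Real.sqrt (1 + t^2/4) = gg t from rfl]
  have := (gg_pos t).ne'
  field_simp

lemma hA (t : ℝ) : HasDerivAt AA (1 / gg t) t := by
  have h1 : HasDerivAt (fun x => x * gg x) (1 * gg t + t * (t / (4 * gg t))) t :=
    (hasDerivAt_id t).mul (hg t)
  have h2 : HasDerivAt (fun x : ℝ => x ^ 2 / 2) t t := by
    simpa using (hasDerivAt_pow 2 t).div_const 2
  have h3 : HasDerivAt (fun x => 1 + x * gg x + x ^ 2 / 2)
      (1 * gg t + t * (t / (4 * gg t)) + t) t := (h1.const_add 1).add h2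
  have h4 := h3.log (ne_of_gt (f_pos t))
  refine HasDerivAt.congr_deriv h4 (Eq.symm ?_)
  have hG := (gg_pos t).ne'
  have hf := (f_pos t).ne'
  rw [div_eq_div_iff hG hf]
  field_simp
  linear_combination (-8) * gg_sq t

noncomputable def R1 (t : ℝ) : ℝ := (1 - t * AA t / (4 * gg t)) / (1 + t ^ 2 / 4)

noncomputable def R2 (t : ℝ) : ℝ :=
  -(3*t) / (4*(1+t^2/4)^2) - AA t / (4*(1+t^2/4)*gg t) + 3*t^2*AA t/(16*(1+t^2/4)^2*gg t)

noncomputable def R3 (t : ℝ) : ℝ :=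
  -1/(1+t^2/4)^2 + 15*t^2/(16*(1+t^2/4)^3) + 9*t*AA t/(16*(1+t^2/4)^2*gg t)
    - 15*t^3*AA t/(64*(1+t^2/4)^3*gg t)

lemma hR (t : ℝ) : HasDerivAt R (R1 t) t := by
  have h := (hA t).div (hg t) (gg_pos t).ne'
  have hRe : R = fun x => AA x / gg x := rfl
  rw [hRe]
  refine HasDerivAt.congr_deriv h (Eq.symm ?_)
  have hG := (gg_pos t).ne'
  unfold R1
  rw [← gg_sq t]
  field_simp

lemma hR1 (t : ℝ) : HasDerivAt R1 (R2 t) t := by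
  have hG := (gg_pos t).ne'
  have h1 : HasDerivAt (fun x => x * AA x) (1 * AA t + t * (1 / gg t)) t :=
    (hasDerivAt_id t).mul (hA t)
  have hden : HasDerivAt (fun x => 4 * gg x) (4 * (t / (4 * gg t))) t := (hg t).const_mul 4
  have hq := h1.div hden (by positivity : (4:ℝ) * gg t ≠ 0)
  have hN := hq.const_sub 1
  have hD : HasDerivAt (fun x : ℝ => 1 + x ^ 2 / 4) (2 * t / 4) t := by
    simpa using ((hasDerivAt_pow 2 t).div_const 4).const_add 1
  have hfull := hN.div hD (hc_pos t).ne'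
  have hRe : R1 = fun x => (1 - x * AA x / (4 * gg x)) / (1 + x ^ 2 / 4) := rfl
  rw [hRe]
  refine HasDerivAt.congr_deriv hfull (Eq.symm ?_)
  unfold R2
  simp only [Pi.div_apply]
  rw [← gg_sq t]
  field_simp
  ring

lemma hR2 (t : ℝ) : HasDerivAt R2 (R3 t) t := by
  have hG := (gg_pos t).ne'
  have hc := (hc_pos t).ne'
  have hD : HasDerivAt (fun x : ℝ => 1 + x ^ 2 / 4) (2 * t / 4) t := by
    simpa using ((hasDerivAt_pow 2 t).div_const 4).const_add 1
  have hnum1 : HasDerivAt (fun x : ℝ => -(3 * x)) (-(3 * 1)) t :=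
    ((hasDerivAt_id t).const_mul 3).neg
  have hden1 : HasDerivAt (fun x : ℝ => 4 * (1 + x ^ 2 / 4) ^ 2)
      (4 * ((2 : ℕ) * (1 + t ^ 2 / 4) ^ 1 * (2 * t / 4))) t := (hD.pow 2).const_mul 4
  have T1 := hnum1.div hden1 (by positivity : (4:ℝ) * (1 + t ^ 2 / 4) ^ 2 ≠ 0)
  have hden2 : HasDerivAt (fun x : ℝ => 4 * (1 + x ^ 2 / 4) * gg x)
      (4 * (2 * t / 4) * gg t + 4 * (1 + t ^ 2 / 4) * (t / (4 * gg t))) t :=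
    (hD.const_mul 4).mul (hg t)
  have T2 := (hA t).div hden2 (by positivity : (4:ℝ) * (1 + t ^ 2 / 4) * gg t ≠ 0)
  have hnum3 : HasDerivAt (fun x : ℝ => 3 * x ^ 2 * AA x)
      (3 * (2 * t ^ 1) * AA t + 3 * t ^ 2 * (1 / gg t)) t := by
    exact (((hasDerivAt_pow 2 t).const_mul 3).mul (hA t))
  have hden3 : HasDerivAt (fun x : ℝ => 16 * (1 + x ^ 2 / 4) ^ 2 * gg x)
      (16 * ((2 : ℕ) * (1 + t ^ 2 / 4) ^ 1 * (2 * t / 4)) * gg t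
        + 16 * (1 + t ^ 2 / 4) ^ 2 * (t / (4 * gg t))) t :=
    ((hD.pow 2).const_mul 16).mul (hg t)
  have T3 := hnum3.div hden3 (by positivity : (16:ℝ) * (1 + t ^ 2 / 4) ^ 2 * gg t ≠ 0)
  have hfull := (T1.sub T2).add T3
  have hRe : R2 = fun x : ℝ =>
      -(3*x) / (4*(1+x^2/4)^2) - AA x / (4*(1+x^2/4)*gg x)
        + 3*x^2*AA x/(16*(1+x^2/4)^2*gg x) := rfl
  rw [hRe]
  refine HasDerivAt.congr_deriv hfull (Eq.symm ?_)
  unfold R3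
  rw [← gg_sq t]
  field_simp
  ring

lemma AA_nonneg {t : ℝ} (ht : 0 ≤ t) : 0 ≤ AA t := by
  apply Real.log_nonneg
  nlinarith [gg_pos t]

lemma AA_le {t : ℝ} (ht : 0 ≤ t) : AA t ≤ t := by
  have hF : ∀ x : ℝ, HasDerivAt (fun y => y - AA y) (1 - 1 / gg x) x :=
    fun x => (hasDerivAt_id x).sub (hA x)
  have hmono : Monotone (fun y : ℝ => y - AA y) := by
    apply monotone_of_deriv_nonneg
    · exact fun x => (hF x).differentiableAt
    · intro x
      rw [(hF x).deriv]
      have h1 : 1 / gg x ≤ 1 := by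
        rw [div_le_one (gg_pos x)]; exact gg_ge_one x
      linarith
  have hA0 : AA 0 = 0 := by simp [AA]
  have := hmono ht
  simp only [hA0] at this
  linarith

theorem stmt_4 : ∀ t ∈ Set.Ioo (0:ℝ) 1, |iteratedDeriv 3 R t| ≤ 1 := by
  intro t ht
  obtain ⟨ht0, ht1⟩ := ht
  have e1 : deriv R = R1 := funext fun x => (hR x).deriv
  have e2 : deriv R1 = R2 := funext fun x => (hR1 x).deriv
  have e3 : deriv R2 = R3 := funext fun x => (hR2 x).deriv
  have hd3 : iteratedDeriv 3 R t = R3 t := by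
    rw [show (3:ℕ) = 0 + 1 + 1 + 1 from rfl, iteratedDeriv_succ, iteratedDeriv_succ,
      iteratedDeriv_succ, iteratedDeriv_zero, e1, e2, e3]
  rw [hd3, abs_le]
  set c : ℝ := 1 + t ^ 2 / 4 with hc
  have hc1 : (1:ℝ) ≤ c := by rw [hc]; nlinarith [sq_nonneg t]
  have hc54 : c ≤ 5/4 := by rw [hc]; nlinarith
  have hcpos : (0:ℝ) < c := by linarith
  have hG1 : 1 ≤ gg t := gg_ge_one t
  have hGpos : 0 < gg t := gg_pos t
  have hA0 : 0 ≤ AA t := AA_nonneg ht0.le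
  have hAt : AA t ≤ t := AA_le ht0.le
  have hkey : R3 t = -1/c^2 + 15*t^2/(16*c^3)
      + t * AA t * (36 - 6*t^2) / (64 * c^3 * gg t) := by
    unfold R3
    rw [← hc]
    field_simp
    ring
  clear_value c
  rw [hkey]
  have ht2 : (0:ℝ) ≤ 36 - 6*t^2 := by nlinarith
  constructor
  · have h1 : -1/c^2 ≥ -1 := by
      rw [ge_iff_le, neg_le, neg_div, neg_neg, div_le_one (by positivity)]
      nlinarith
    have h2 : 0 ≤ 15*t^2/(16*c^3) := by positivity
    have h3 : 0 ≤ t * AA t * (36 - 6*t^2) / (64 * c^3 * gg t) := by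
      apply div_nonneg _ (by positivity)
      positivity
    linarith
  · have h1 : -1/c^2 ≤ -16/25 := by
      have h1' : (16:ℝ)/25 ≤ 1/c^2 := by
        rw [div_le_div_iff₀ (by norm_num) (by positivity)]
        nlinarith [mul_nonneg (sub_nonneg.mpr hc54) (sub_nonneg.mpr hc1)]
      rw [neg_div]
      linarith
    have h2 : 15*t^2/(16*c^3) ≤ 15/16 := by
      rw [div_le_div_iff₀ (by positivity) (by norm_num)]
      nlinarith [sq_nonneg (c-1), sq_nonneg c]
    have h3 : t * AA t * (36 - 6*t^2) / (64 * c^3 * gg t) ≤ 36/64 := by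
      rw [div_le_div_iff₀ (by positivity) (by norm_num)]
      have hta : t * AA t ≤ 1 := by nlinarith [mul_le_mul_of_nonneg_left hAt ht0.le]
      have hta0 : 0 ≤ t * AA t := by positivity
      have hn : t * AA t * (36 - 6*t^2) ≤ 36 := by nlinarith
      have h5 : (1:ℝ) ≤ c^3 := by nlinarith
      have hd : (64:ℝ) ≤ 64 * c^3 * gg t := by
        nlinarith [mul_le_mul_of_nonneg_left hG1 (by positivity : (0:ℝ) ≤ 64*c^3)]
      linarith [hn, hd]
    linarith
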